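/- Let C_M be a ternary-valued code of length n over {0,1,2} with minimum Manhattan (ℓ_1) distance at least ⌈d/(1+λ)⌉, and for each m let C_H(m) be a binary code of length m with minimum Hamming distance at least ⌈d/λ⌉. Define C_λ(n,d) = {(a;b) ∈ {0,1}^n × {0,1}^n : (a_1+b_1,...,a_n+b_n) ∈ C_M (integer addition) and S(a;b) ∈ C_H(w(a;b))}, where S(a;b) is the subsequence of a restricted to the coordinates where a and b differ. Then any two distinct elements of C_λ(n,d) are at asymmetric Lee distance at least d. -/

import Mathlib

open Finset

def ind (p : Prop) [Decidable p] : ℤ := if p then 1 else 0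

def aldSym (lam : ℕ) (a b c d : Bool) : ℤ :=
  (1 + lam) * (ind (a = b) + ind (c = d))
    + lam * ind (a = !b ∧ !b = !c ∧ !c = d)
    - 2 * (1 + lam) * ind (a = b ∧ b = c ∧ c = d)

def ALD (lam n : ℕ) (x y : (Fin n → Bool) × (Fin n → Bool)) : ℤ :=
  ∑ i, aldSym lam (x.1 i) (x.2 i) (y.1 i) (y.2 i)

def wt {n : ℕ} (a b : Fin n → Bool) : ℕ :=
  (Finset.univ.filter fun i => a i ≠ b i).card
def supp {n : ℕ} (a b : Fin n → Bool) : Finset (Fin n) :=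
  Finset.univ.filter fun i => a i ≠ b i

def subseq {n : ℕ} (a b : Fin n → Bool) : Fin (wt a b) → Bool :=
  fun k => a ((supp a b).orderIsoOfFin rfl k)

lemma key1 (lam : ℕ) (a b c d : Bool) :
    ((1:ℤ)+lam) * ((((if a then 1 else 0)+(if b then 1 else 0):ℕ):ℤ)
      - (((if c then 1 else 0)+(if d then 1 else 0):ℕ):ℤ)).natAbs ≤ aldSym lam a b c d := by
  cases a <;> cases b <;> cases c <;> cases d <;> simp [aldSym, ind] <;> omega

lemma key2 (lam : ℕ) (a b c d : Bool)
    (h : ((if a then 1 else 0)+(if b then 1 else 0):ℕ) = (if c then 1 else 0)+(if d then 1 else 0)) :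
    aldSym lam a b c d = lam * (if (a,b) = (c,d) then 0 else 1) := by
  cases a <;> cases b <;> cases c <;> cases d <;> simp_all [aldSym, ind] <;> ring

lemma bool_aux (a b c d : Bool)
    (h : ((if a then 1 else 0)+(if b then 1 else 0):ℕ) = (if c then 1 else 0)+(if d then 1 else 0)) :
    ((a ≠ b) ↔ (c ≠ d)) ∧ ((a,b) ≠ (c,d) → a ≠ c ∧ a ≠ b) := by
  cases a <;> cases b <;> cases c <;> cases d <;> simp_all

lemma mem_congr {n : ℕ} (CH : (m : ℕ) → Set (Fin m → Bool)) (f : Fin n → Bool)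
    (s t : Finset (Fin n)) (h : s = t)
    (hm : (fun k : Fin t.card => f (t.orderIsoOfFin rfl k)) ∈ CH t.card) :
    (fun k : Fin s.card => f (s.orderIsoOfFin rfl k)) ∈ CH s.card := by subst h; exact hm

theorem composite_code_ald_ge_d (lam n d : ℕ) (hlam : 0 < lam) (hd : 0 < d)
    (CM : Set (Fin n → ℕ)) (hCMval : ∀ f ∈ CM, ∀ i, f i ≤ 2)
    (hCM : ∀ f ∈ CM, ∀ g ∈ CM, f ≠ g →
      ((d + lam) / (1 + lam) : ℕ) ≤ ∑ i, ((f i : ℤ) - (g i : ℤ)).natAbs)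
    (CH : (m : ℕ) → Set (Fin m → Bool))
    (hCH : ∀ m : ℕ, ∀ p ∈ CH m, ∀ q ∈ CH m, p ≠ q →
      ((d + lam - 1) / lam : ℕ) ≤ hammingDist p q)
    (x y : (Fin n → Bool) × (Fin n → Bool))
    (hx1 : (fun i => (if x.1 i then 1 else 0) + (if x.2 i then 1 else 0) : Fin n → ℕ) ∈ CM)
    (hx2 : subseq x.1 x.2 ∈ CH (wt x.1 x.2))
    (hy1 : (fun i => (if y.1 i then 1 else 0) + (if y.2 i then 1 else 0) : Fin n → ℕ) ∈ CM)
    (hy2 : subseq y.1 y.2 ∈ CH (wt y.1 y.2))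
    (hxy : x ≠ y) :
    (d : ℤ) ≤ ALD lam n x y := by
  by_cases hf : (fun i => (if x.1 i then 1 else 0) + (if x.2 i then 1 else 0) : Fin n → ℕ)
      = (fun i => (if y.1 i then 1 else 0) + (if y.2 i then 1 else 0) : Fin n → ℕ)
  · -- sums equal: use CH
    have hsum : ∀ i, ((if x.1 i then 1 else 0) + (if x.2 i then 1 else 0) : ℕ)
        = (if y.1 i then 1 else 0) + (if y.2 i then 1 else 0) := fun i => congrFun hf i
    have hs : supp x.1 x.2 = supp y.1 y.2 := by
      ext i
      simp only [supp, mem_filter, mem_univ, true_and]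
      exact (bool_aux _ _ _ _ (hsum i)).1
    set N := (Finset.univ.filter fun i => ¬ (x.1 i, x.2 i) = (y.1 i, y.2 i)).card with hN
    have hALD : ALD lam n x y = lam * N := by
      rw [hN, Finset.card_filter, ALD]
      push_cast
      rw [Finset.mul_sum]
      refine Finset.sum_congr rfl fun i _ => ?_
      rw [key2 lam _ _ _ _ (hsum i)]
      by_cases h : (x.1 i, x.2 i) = (y.1 i, y.2 i) <;> simp [h]
    have e : Fin (wt x.1 x.2) ≃o {z // z ∈ supp x.1 x.2} := (supp x.1 x.2).orderIsoOfFin rfl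
    set q : Fin (wt x.1 x.2) → Bool := fun k => y.1 ((supp x.1 x.2).orderIsoOfFin rfl k) with hq
    have hqCH : q ∈ CH (wt x.1 x.2) :=
      mem_congr CH y.1 (supp x.1 x.2) (supp y.1 y.2) hs hy2
    have hcard : hammingDist (subseq x.1 x.2) q = N := by
      rw [hammingDist, hN]
      apply Finset.card_bij' (fun k _ => (((supp x.1 x.2).orderIsoOfFin rfl k : Fin n)))
        (fun i hi => ((supp x.1 x.2).orderIsoOfFin rfl).symm ⟨i, by
          simp only [mem_filter, mem_univ, true_and] at hi
          simp only [supp, mem_filter, mem_univ, true_and]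
          exact ((bool_aux _ _ _ _ (hsum i)).2 hi).2⟩)
      case hi =>
        intro k hk
        simp only [mem_filter, mem_univ, true_and] at hk ⊢
        have h1 : x.1 ((supp x.1 x.2).orderIsoOfFin rfl k : Fin n)
            ≠ y.1 ((supp x.1 x.2).orderIsoOfFin rfl k : Fin n) := by
          have hk' := (Finset.mem_filter (s := (Finset.univ : Finset (Fin (wt x.1 x.2)))) (p := fun j => subseq x.1 x.2 j ≠ q j)).mp hk
          simpa [subseq, hq] using hk'.2
        intro hpair
        exact h1 (congrArg Prod.fst hpair)
      case hj =>
        intro i hi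
        simp only [mem_filter, mem_univ, true_and] at hi ⊢
        have h1 : x.1 i ≠ y.1 i := ((bool_aux _ _ _ _ (hsum i)).2 hi).1
        set E := (supp x.1 x.2).orderIsoOfFin rfl with hE
        refine (Finset.mem_filter (s := (Finset.univ : Finset (Fin (wt x.1 x.2)))) (p := fun j => subseq x.1 x.2 j ≠ q j)).mpr ⟨Finset.mem_univ _, ?_⟩
        show x.1 (E (E.symm ⟨i, _⟩) : Fin n) ≠ y.1 (E (E.symm ⟨i, _⟩) : Fin n)
        rw [show (E (E.symm ⟨i, _⟩) : Fin n) = i from congrArg Subtype.val (E.apply_symm_apply _)]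
        exact h1
      case left_inv =>
        intros
        exact (congrArg (((supp x.1 x.2).orderIsoOfFin rfl)).symm
          (Subtype.ext rfl)).trans (OrderIso.symm_apply_apply _ _)
      case right_inv =>
        intros
        exact congrArg Subtype.val
          (((supp x.1 x.2).orderIsoOfFin rfl).apply_symm_apply _)
    have hNpos : 0 < N := by
      have hex : ∃ i, (x.1 i, x.2 i) ≠ (y.1 i, y.2 i) := by
        by_contra h
        push_neg at h
        exact hxy (Prod.ext (funext fun i => congrArg Prod.fst (h i))
          (funext fun i => congrArg Prod.snd (h i)))
      obtain ⟨i, hi⟩ := hex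
      exact hN ▸ Finset.card_pos.mpr ⟨i, Finset.mem_filter.mpr ⟨Finset.mem_univ i, hi⟩⟩
    have hne : subseq x.1 x.2 ≠ q := by
      intro heq
      rw [heq] at hcard
      simp [hammingDist] at hcard
      omega
    have hH := hCH _ _ hx2 _ hqCH hne
    rw [hcard] at hH
    rw [hALD]
    have hnat : d ≤ lam * N := by
      have h1 := Nat.div_add_mod (d + lam - 1) lam
      have h2 := Nat.mod_lt (d + lam - 1) hlam
      have h3 : lam * ((d + lam - 1) / lam) ≤ lam * N := Nat.mul_le_mul_left _ hH
      omega
    exact_mod_cast hnat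
  · -- sums differ: use CM
    have hManh := hCM _ hx1 _ hy1 hf
    have h1 : (d : ℤ) ≤ (1 + lam) * ((d + lam) / (1 + lam) : ℕ) := by
      have h2 := Nat.div_add_mod (d + lam) (1 + lam)
      have h3 := Nat.mod_lt (d + lam) (show 0 < 1 + lam by omega)
      have h4 : d ≤ (1 + lam) * ((d + lam) / (1 + lam)) := by nlinarith
      exact_mod_cast h4
    calc (d : ℤ) ≤ (1 + lam) * ((d + lam) / (1 + lam) : ℕ) := h1
      _ ≤ (1 + lam) * (∑ i, ((((if x.1 i then 1 else 0) + (if x.2 i then 1 else 0) : ℕ) : ℤ)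
            - (((if y.1 i then 1 else 0) + (if y.2 i then 1 else 0) : ℕ) : ℤ)).natAbs : ℕ) := by
          exact_mod_cast Nat.mul_le_mul_left (1 + lam) hManh
      _ = ∑ i, ((1:ℤ)+lam) * ((((if x.1 i then 1 else 0)+(if x.2 i then 1 else 0):ℕ):ℤ)
            - (((if y.1 i then 1 else 0)+(if y.2 i then 1 else 0):ℕ):ℤ)).natAbs := by
          push_cast
          rw [Finset.mul_sum]
      _ ≤ ALD lam n x y := Finset.sum_le_sum fun i _ => key1 lam _ _ _ _
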